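/- Suppose f : ℝⁿ → ℝ is continuously differentiable and λ-strongly convex with L-Lipschitz gradient (0 < λ, L), μ > 0, and φ(x) = f(x) + μ‖x‖₁. If x, x⁺ ∈ ℝⁿ satisfy φ(x⁺) ≤ Γ(x), then for every d ∈ ℝⁿ one has φ(x⁺) ≤ φ(x + (λ/L) d) + (λ²/(2L)) (1 − λ/L) ‖d‖₂². -/

import Mathlib

open scoped InnerProductSpace

open Filter Topology

-- first-order strong convexity
theorem foc {n : ℕ}
    (f : EuclideanSpace ℝ (Fin n) → ℝ) (lam : ℝ)
    (hf : ContDiff ℝ 1 f)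
    (hsc : ∀ x y : EuclideanSpace ℝ (Fin n), ∀ t ∈ Set.Icc (0:ℝ) 1,
      f (t • x + (1 - t) • y)
        ≤ t * f x + (1 - t) * f y - lam / 2 * t * (1 - t) * ‖x - y‖ ^ 2)
    (x h : EuclideanSpace ℝ (Fin n)) :
    f x + ⟪gradient f x, h⟫_ℝ + lam / 2 * ‖h‖ ^ 2 ≤ f (x + h) := by
  have hdiff : DifferentiableAt ℝ f x := (hf.differentiable one_ne_zero).differentiableAt
  have hgrad := hdiff.hasGradientAt
  have hF : HasFDerivAt f ((InnerProductSpace.toDual ℝ _) (gradient f x)) x :=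
    hgrad.hasFDerivAt
  have hline : HasDerivAt (fun t : ℝ => x + t • h) h 0 := by
    simpa using ((hasDerivAt_id (0:ℝ)).smul_const h).const_add x
  have hg : HasDerivAt (fun t : ℝ => f (x + t • h)) ⟪gradient f x, h⟫_ℝ 0 := by
    have hF0 : HasFDerivAt f ((InnerProductSpace.toDual ℝ _) (gradient f x)) (x + (0:ℝ) • h) := by
      simpa using hF
    have := hF0.comp_hasDerivAt (x := (0:ℝ)) hline
    exact this
  -- slope tendsto
  have hslope : Tendsto (fun t : ℝ => (f (x + t • h) - f x) / t) (𝓝[>] 0)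
      (𝓝 ⟪gradient f x, h⟫_ℝ) := by
    have := hasDerivAt_iff_tendsto_slope.mp hg
    have := this.mono_left (nhdsWithin_mono 0 (by intro t ht; exact ne_of_gt ht))
    refine this.congr' ?_
    filter_upwards [self_mem_nhdsWithin] with t ht
    simp [slope_def_field, div_eq_inv_mul]
  have hbound : ∀ t ∈ Set.Ioc (0:ℝ) 1,
      (f (x + t • h) - f x) / t ≤ f (x + h) - f x - lam / 2 * (1 - t) * ‖h‖ ^ 2 := by
    intro t ht
    have := hsc (x + h) x t ⟨le_of_lt ht.1, ht.2⟩
    have key : f (x + t • h) ≤ t * f (x + h) + (1 - t) * f x - lam / 2 * t * (1 - t) * ‖h‖ ^ 2 := by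
      have e1 : t • (x + h) + (1 - t) • x = x + t • h := by module
      have e2 : (x + h) - x = h := by abel
      rw [e1, e2] at this; exact this
    rw [div_le_iff₀ ht.1]
    nlinarith [ht.1]
  have hlim2 : Tendsto (fun t : ℝ => f (x + h) - f x - lam / 2 * (1 - t) * ‖h‖ ^ 2)
      (𝓝[>] 0) (𝓝 (f (x + h) - f x - lam / 2 * ‖h‖ ^ 2)) := by
    have : Continuous (fun t : ℝ => f (x + h) - f x - lam / 2 * (1 - t) * ‖h‖ ^ 2) := by
      continuity
    have h2 : Tendsto (fun t : ℝ => f (x + h) - f x - lam / 2 * (1 - t) * ‖h‖ ^ 2)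
        (𝓝[>] 0) (𝓝 (f (x + h) - f x - lam / 2 * (1 - (0:ℝ)) * ‖h‖ ^ 2)) :=
      (this.tendsto 0).mono_left nhdsWithin_le_nhds
    simpa using h2
  have hev : ∀ᶠ t in 𝓝[>] (0:ℝ), (f (x + t • h) - f x) / t
      ≤ f (x + h) - f x - lam / 2 * (1 - t) * ‖h‖ ^ 2 := by
    filter_upwards [Ioc_mem_nhdsGT_of_mem (Set.mem_Ico.mpr ⟨le_refl 0, one_pos⟩)] with t ht
    exact hbound t ht
  have hfin := le_of_tendsto_of_tendsto hslope hlim2 hev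
  linarith

/-- If `φ(x⁺) ≤ Γ(x)`, then for every direction `d`,
`φ(x⁺) ≤ φ(x + (λ/L)d) + (λ²/(2L))(1 − λ/L)‖d‖₂²`. -/
theorem stmt_2 {n : ℕ} (hn : 0 < n)
    (f : EuclideanSpace ℝ (Fin n) → ℝ)
    (lam L mu : ℝ) (hlam : 0 < lam) (hL : 0 < L) (hmu : 0 < mu)
    (hf : ContDiff ℝ 1 f)
    (hsc : ∀ x y : EuclideanSpace ℝ (Fin n), ∀ t ∈ Set.Icc (0:ℝ) 1,
      f (t • x + (1 - t) • y)
        ≤ t * f x + (1 - t) * f y - lam / 2 * t * (1 - t) * ‖x - y‖ ^ 2)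
    (hlip : ∀ x y : EuclideanSpace ℝ (Fin n),
      ‖gradient f x - gradient f y‖ ≤ L * ‖x - y‖)
    (φ : EuclideanSpace ℝ (Fin n) → ℝ)
    (hφ : ∀ x, φ x = f x + mu * ∑ i, |x i|)
    (Γ : EuclideanSpace ℝ (Fin n) → ℝ)
    (hΓ : ∀ x, Γ x = ⨅ y : EuclideanSpace ℝ (Fin n),
      (f x + ⟪gradient f x, y - x⟫_ℝ + L / 2 * ‖y - x‖ ^ 2 + mu * ∑ i, |y i|))
    (x xplus : EuclideanSpace ℝ (Fin n)) (hstep : φ xplus ≤ Γ x) :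
    ∀ d : EuclideanSpace ℝ (Fin n),
      φ xplus ≤ φ (x + (lam / L) • d) + lam ^ 2 / (2 * L) * (1 - lam / L) * ‖d‖ ^ 2 := by
  intro d
  set t : ℝ := lam / L with ht
  have htpos : 0 < t := div_pos hlam hL
  set y : EuclideanSpace ℝ (Fin n) := x + t • d with hy
  set F : EuclideanSpace ℝ (Fin n) → ℝ := fun z =>
    f x + ⟪gradient f x, z - x⟫_ℝ + L / 2 * ‖z - x‖ ^ 2 + mu * ∑ i, |z i| with hFdef
  have hbdd : BddBelow (Set.range F) := by
    refine ⟨f x - ‖gradient f x‖ ^ 2 / (2 * L), ?_⟩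
    rintro _ ⟨z, rfl⟩
    have h1 : -(‖gradient f x‖ * ‖z - x‖) ≤ ⟪gradient f x, z - x⟫_ℝ := by
      have := abs_real_inner_le_norm (gradient f x) (z - x)
      cases' abs_le.mp this with h _
      linarith
    have h2 : (0:ℝ) ≤ ∑ i, |z i| := Finset.sum_nonneg fun i _ => abs_nonneg _
    have h3 : (0:ℝ) ≤ ‖z - x‖ := norm_nonneg _
    have h4 : (0:ℝ) ≤ ‖gradient f x‖ := norm_nonneg _
    simp only [hFdef]
    have h2L : (0:ℝ) < 2 * L := by linarith
    have key : ‖gradient f x‖ * ‖z - x‖ - L / 2 * ‖z - x‖ ^ 2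
        ≤ ‖gradient f x‖ ^ 2 / (2 * L) := by
      rw [le_div_iff₀ h2L]
      nlinarith [sq_nonneg (L * ‖z - x‖ - ‖gradient f x‖)]
    have h5 : 0 ≤ mu * ∑ i, |z i| := mul_nonneg hmu.le h2
    linarith
  have hΓle : Γ x ≤ F y := by
    rw [hΓ x]
    exact ciInf_le hbdd y
  have hfoc := foc f lam hf hsc x (t • d)
  have hnorm : ‖t • d‖ = t * ‖d‖ := by
    rw [norm_smul, Real.norm_eq_abs, abs_of_pos htpos]
  have hyx : y - x = t • d := by simp [hy]
  have hFy : F y = f x + ⟪gradient f x, t • d⟫_ℝ + L / 2 * (t * ‖d‖) ^ 2 + mu * ∑ i, |y i| := by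
    simp only [hFdef, hyx, hnorm]
  have hkey : F y ≤ φ y + lam ^ 2 / (2 * L) * (1 - lam / L) * ‖d‖ ^ 2 := by
    rw [hFy, hφ y]
    have hfle : f x + ⟪gradient f x, t • d⟫_ℝ ≤ f y - lam / 2 * (t * ‖d‖) ^ 2 := by
      have : x + t • d = y := rfl
      rw [← this]
      rw [← hnorm]
      linarith [hfoc]
    have hcoef : L / 2 * (t * ‖d‖) ^ 2 - lam / 2 * (t * ‖d‖) ^ 2
        = lam ^ 2 / (2 * L) * (1 - lam / L) * ‖d‖ ^ 2 := by
      rw [ht]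
      field_simp
    nlinarith [hfle, hcoef]
  calc φ xplus ≤ Γ x := hstep
    _ ≤ F y := hΓle
    _ ≤ _ := hkey
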